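/- Adopt the orthogonal decomposition Ṽ = V ⊕ span(e, f) with ⟨e,e⟩ = ⟨f,f⟩ = 0 and ⟨e,f⟩ = −1. Let K̃ ⊆ Ṽ ⊗ k be a characteristic subspace with e ⊗ 1 ∉ K̃, let K = π_e(K̃), and let σ be the Artin invariant of K. If σ ≥ 2, then there exists an isotropic vector v ∈ Ṽ (v ≠ 0, ⟨v,v⟩ = 0) such that ⟨v, e⟩ ≠ 0, v ⊗ 1 ∉ K̃, and ⟨v, x⟩ = 0 for every x ∈ Ṽ with x ⊗ 1 ∈ K̃. -/

import Mathlib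

open TensorProduct

section Basics

variable (p : ℕ) [Fact p.Prime]
variable (k : Type*) [Field k] [CharP k p] [Algebra (ZMod p) k]

/-- The `p`-th power map on `k` as a `ZMod p`-linear map. -/
noncomputable def frobL : k →ₗ[ZMod p] k where
  toFun x := x ^ p
  map_add' x y := add_pow_char x y p
  map_smul' c x := by
    simp only [Algebra.smul_def, mul_pow, RingHom.id_apply]
    congr 1
    rw [← map_pow, ZMod.pow_card]

@[simp] lemma frobL_apply (x : k) : frobL p k x = x ^ p := rfl

instance frobSurj [IsAlgClosed k] : RingHomSurjective (frobenius k p) := by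
  constructor
  intro y
  obtain ⟨z, hz⟩ := IsAlgClosed.exists_pow_nat_eq y (n := p) (Fact.out (p := p.Prime)).pos
  exact ⟨z, by simpa [frobenius_def] using hz⟩

variable (V : Type*) [AddCommGroup V] [Module (ZMod p) V]

private lemma rT_smul (c : k) (m : k ⊗[ZMod p] V) :
    LinearMap.rTensor V (frobL p k) (c • m) = c ^ p • LinearMap.rTensor V (frobL p k) m := by
  induction m using TensorProduct.induction_on with
  | zero => simp
  | tmul a x => simp [TensorProduct.smul_tmul', smul_eq_mul, mul_pow]
  | add x y hx hy => simp [smul_add, hx, hy]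

/-- The Frobenius-semilinear bijection `φ` of `k ⊗ V` determined by `φ(s ⊗ x) = s^p ⊗ x`. -/
noncomputable def phiT : (k ⊗[ZMod p] V) →ₛₗ[frobenius k p] (k ⊗[ZMod p] V) where
  toFun := LinearMap.rTensor V (frobL p k)
  map_add' x y := map_add _ x y
  map_smul' c m := by
    show LinearMap.rTensor V (frobL p k) (c • m) = (frobenius k p) c • LinearMap.rTensor V (frobL p k) m
    rw [rT_smul, frobenius_def]

@[simp] lemma phiT_apply (m : k ⊗[ZMod p] V) :
    phiT p k V m = LinearMap.rTensor V (frobL p k) m := rfl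

/-- A bilinear form is non-degenerate if its radical is zero. -/
def Nondeg {R M : Type*} [CommSemiring R] [AddCommMonoid M] [Module R M]
    (b : M →ₗ[R] M →ₗ[R] R) : Prop :=
  ∀ x, (∀ y, b x y = 0) → x = 0

/-- A bilinear form is non-neutral if there is no totally isotropic subspace of half
dimension. -/
def NonNeutral {R M : Type*} [CommRing R] [AddCommGroup M] [Module R M]
    (b : M →ₗ[R] M →ₗ[R] R) : Prop :=
  ¬ ∃ W : Submodule R M, (∀ x ∈ W, ∀ y ∈ W, b x y = 0) ∧
      2 * Module.finrank R ↥W = Module.finrank R M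

variable {p k V}

/-- A characteristic subspace of `V ⊗ k`, where `dim V = 2σ₀`: a totally isotropic
`k`-subspace of dimension `σ₀` with `dim (K + φ K) = σ₀ + 1`. -/
def IsCharSub [IsAlgClosed k] (σ₀ : ℕ) (b : LinearMap.BilinForm (ZMod p) V)
    (K : Submodule k (k ⊗[ZMod p] V)) : Prop :=
  (∀ x ∈ K, ∀ y ∈ K, b.baseChange k x y = 0) ∧
  Module.finrank k ↥K = σ₀ ∧
  Module.finrank k ↥(K ⊔ K.map (phiT p k V)) = σ₀ + 1

/-- `{x ∈ V : x ⊗ 1 ∈ K}` as an `𝔽_p`-subspace of `V`. -/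
def KcapV (K : Submodule k (k ⊗[ZMod p] V)) : Submodule (ZMod p) V where
  carrier := {x | (1 : k) ⊗ₜ[ZMod p] x ∈ K}
  add_mem' := by
    intro a b ha hb
    simp only [Set.mem_setOf_eq] at *
    rw [TensorProduct.tmul_add]
    exact K.add_mem ha hb
  zero_mem' := by
    simp only [Set.mem_setOf_eq, TensorProduct.tmul_zero]
    exact K.zero_mem
  smul_mem' := by
    intro c x hx
    simp only [Set.mem_setOf_eq] at *
    rw [TensorProduct.tmul_smul]
    exact K.smul_of_tower_mem c hx

end Basics

section Quot

variable {p : ℕ} [Fact p.Prime]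
variable {Vt : Type*} [AddCommGroup Vt] [Module (ZMod p) Vt]

/-- The orthogonal complement of a vector. -/
def perp (b : LinearMap.BilinForm (ZMod p) Vt) (v : Vt) : Submodule (ZMod p) Vt :=
  LinearMap.ker (b v)

lemma self_mem_perp {b : LinearMap.BilinForm (ZMod p) Vt} {v : Vt} (hv : b v v = 0) :
    v ∈ perp b v := LinearMap.mem_ker.mpr hv

/-- The line spanned by an isotropic vector `v`, inside `v^⊥`. -/
noncomputable def lineV (b : LinearMap.BilinForm (ZMod p) Vt) (v : Vt) (hv : b v v = 0) :
    Submodule (ZMod p) (perp b v) :=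
  Submodule.span (ZMod p) {⟨v, self_mem_perp hv⟩}

lemma lineV_le (b : LinearMap.BilinForm (ZMod p) Vt) (v : Vt) (hv : b v v = 0)
    {P : Submodule (ZMod p) (perp b v)}
    (h : (⟨v, self_mem_perp hv⟩ : perp b v) ∈ P) : lineV b v hv ≤ P :=
  Submodule.span_le.mpr (Set.singleton_subset_iff.mpr h)

/-- The quotient `v^⊥ / ⟨v⟩`. -/
noncomputable abbrev Vquot (b : LinearMap.BilinForm (ZMod p) Vt) (v : Vt)
    (hv : b v v = 0) := (perp b v) ⧸ (lineV b v hv)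

/-- Restriction of the form to `v^⊥`. -/
noncomputable def bRes (b : LinearMap.BilinForm (ZMod p) Vt) (v : Vt) :
    LinearMap.BilinForm (ZMod p) (perp b v) :=
  b.compl₁₂ (perp b v).subtype (perp b v).subtype

lemma bRes_apply (b : LinearMap.BilinForm (ZMod p) Vt) (v : Vt) (x y : perp b v) :
    bRes b v x y = b x y := by
  simp [bRes]

noncomputable def bQuotAux (b : LinearMap.BilinForm (ZMod p) Vt) (v : Vt)
    (hsymm : ∀ x y, b x y = b y x) (hv : b v v = 0) :
    (perp b v) →ₗ[ZMod p] (Vquot b v hv) →ₗ[ZMod p] (ZMod p) where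
  toFun x := Submodule.liftQ (lineV b v hv) (bRes b v x) (lineV_le b v hv (by
    rw [LinearMap.mem_ker, bRes_apply, hsymm]
    exact LinearMap.mem_ker.mp x.2))
  map_add' x y := by
    apply LinearMap.ext
    intro z
    obtain ⟨w, rfl⟩ := Submodule.Quotient.mk_surjective _ z
    simp only [Submodule.liftQ_apply, LinearMap.add_apply, bRes_apply,
      Submodule.coe_add, map_add]
  map_smul' c x := by
    apply LinearMap.ext
    intro z
    obtain ⟨w, rfl⟩ := Submodule.Quotient.mk_surjective _ z
    simp only [Submodule.liftQ_apply, LinearMap.smul_apply, bRes_apply,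
      Submodule.coe_smul, map_smul, RingHom.id_apply, smul_eq_mul]

/-- The symmetric bilinear form induced on `v^⊥/⟨v⟩` by the form of `Ṽ`. -/
noncomputable def bQuot (b : LinearMap.BilinForm (ZMod p) Vt) (v : Vt)
    (hsymm : ∀ x y, b x y = b y x) (hv : b v v = 0) :
    LinearMap.BilinForm (ZMod p) (Vquot b v hv) :=
  Submodule.liftQ (lineV b v hv) (bQuotAux b v hsymm hv) (lineV_le b v hv (by
    rw [LinearMap.mem_ker]
    apply LinearMap.ext
    intro z
    obtain ⟨w, rfl⟩ := Submodule.Quotient.mk_surjective _ z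
    simp only [bQuotAux, LinearMap.coe_mk, AddHom.coe_mk, Submodule.liftQ_apply,
      bRes_apply, LinearMap.zero_apply]
    exact LinearMap.mem_ker.mp w.2))

variable (k : Type*) [Field k] [CharP k p] [Algebra (ZMod p) k]

/-- The base change to `k` of the inclusion `v^⊥ ⊆ Ṽ`. -/
noncomputable def iotaPerp (b : LinearMap.BilinForm (ZMod p) Vt) (v : Vt) :
    (k ⊗[ZMod p] ↥(perp b v)) →ₗ[k] (k ⊗[ZMod p] Vt) :=
  LinearMap.baseChange k (perp b v).subtype

/-- The base change to `k` of the quotient map `v^⊥ → v^⊥/⟨v⟩`. -/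
noncomputable def qMap (b : LinearMap.BilinForm (ZMod p) Vt) (v : Vt) (hv : b v v = 0) :
    (k ⊗[ZMod p] ↥(perp b v)) →ₗ[k] (k ⊗[ZMod p] (Vquot b v hv)) :=
  LinearMap.baseChange k (lineV b v hv).mkQ

/-- `π_v(K̃)`: the image of `K̃ ∩ (v^⊥ ⊗ k)` under the quotient map
`v^⊥ ⊗ k → (v^⊥/⟨v⟩) ⊗ k`. -/
noncomputable def piV (b : LinearMap.BilinForm (ZMod p) Vt) (v : Vt) (hv : b v v = 0)
    (K : Submodule k (k ⊗[ZMod p] Vt)) : Submodule k (k ⊗[ZMod p] (Vquot b v hv)) :=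
  (K.comap (iotaPerp k b v)).map (qMap k b v hv)

end Quot
section Decomp

variable {p : ℕ} [Fact p.Prime]
variable {k : Type*} [Field k] [CharP k p] [Algebra (ZMod p) k]
variable {V Vt : Type*} [AddCommGroup V] [Module (ZMod p) V]
  [AddCommGroup Vt] [Module (ZMod p) Vt]

/-- The characteristic subspace `K(B)` of `Ṽ ⊗ k` attached to a characteristic subspace
`K ⊆ V ⊗ k` and a vector `B ∈ V ⊗ k`: the span of `{x + ⟨x,B⟩v : x ∈ K}` together with
`w + B + (B²/2)v`. -/
noncomputable def KB (bV : LinearMap.BilinForm (ZMod p) V) (j : V →ₗ[ZMod p] Vt)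
    (v w : Vt) (K : Submodule k (k ⊗[ZMod p] V)) (B : k ⊗[ZMod p] V) :
    Submodule k (k ⊗[ZMod p] Vt) :=
  Submodule.span k
    (((fun x => LinearMap.baseChange k j x + (bV.baseChange k x B) • ((1 : k) ⊗ₜ[ZMod p] v)) '' K) ∪
      {(1 : k) ⊗ₜ[ZMod p] w + LinearMap.baseChange k j B +
        ((bV.baseChange k B B) / 2) • ((1 : k) ⊗ₜ[ZMod p] v)})

/-- `π_v(K̃)` computed using the fixed orthogonal decomposition `Ṽ = V ⊕ ⟨v,w⟩`:
the subspace of those `x ∈ V ⊗ k` admitting a lift `x + c·(v ⊗ 1)` lying in `K̃`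
(equivalently, whose image in `Ṽ ⊗ k` lies in `K̃ + ⟨v ⊗ 1⟩`). -/
noncomputable def projSub (j : V →ₗ[ZMod p] Vt) (v : Vt)
    (Kt : Submodule k (k ⊗[ZMod p] Vt)) : Submodule k (k ⊗[ZMod p] V) :=
  (Kt ⊔ Submodule.span k {(1 : k) ⊗ₜ[ZMod p] v}).comap (LinearMap.baseChange k j)

lemma mem_projSub {j : V →ₗ[ZMod p] Vt} {v : Vt} {Kt : Submodule k (k ⊗[ZMod p] Vt)}
    (x : k ⊗[ZMod p] V) (c : k)
    (h : LinearMap.baseChange k j x + c • ((1 : k) ⊗ₜ[ZMod p] v) ∈ Kt) :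
    x ∈ projSub j v Kt := by
  have : LinearMap.baseChange k j x
      = (LinearMap.baseChange k j x + c • ((1 : k) ⊗ₜ[ZMod p] v))
        + (-c) • ((1 : k) ⊗ₜ[ZMod p] v) := by
    first
      | (rw [neg_smul]; abel)
      | simp only [neg_smul, add_neg_cancel_right]
      | simp
      | module
  rw [projSub, Submodule.mem_comap, this]
  exact Submodule.add_mem _ (Submodule.mem_sup_left h)
    (Submodule.mem_sup_right (Submodule.smul_mem _ _ (Submodule.mem_span_singleton_self _)))

variable [IsAlgClosed k]

/-- The condition `B - φ(B) ∈ K + φ(K)` defining `U(K)` before quotienting. -/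
def UCond (K : Submodule k (k ⊗[ZMod p] V)) (B : k ⊗[ZMod p] V) : Prop :=
  B - phiT p k V B ∈ K ⊔ K.map (phiT p k V)

/-- `{B ∈ V ⊗ k : B - φ(B) ∈ K + φ(K)}` as an additive group. -/
def Ugrp (K : Submodule k (k ⊗[ZMod p] V)) : AddSubgroup (k ⊗[ZMod p] V) where
  carrier := {B | B - phiT p k V B ∈ K ⊔ K.map (phiT p k V)}
  add_mem' := by
    intro a b ha hb
    simp only [Set.mem_setOf_eq] at *
    have e : a + b - phiT p k V (a + b) = (a - phiT p k V a) + (b - phiT p k V b) := by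
      rw [map_add]; abel
    rw [e]; exact Submodule.add_mem _ ha hb
  zero_mem' := by
    simp only [Set.mem_setOf_eq, map_zero, sub_zero]
    exact Submodule.zero_mem _
  neg_mem' := by
    intro a ha
    simp only [Set.mem_setOf_eq] at *
    have e : -a - phiT p k V (-a) = -(a - phiT p k V a) := by
      rw [map_neg]; abel
    rw [e]; exact Submodule.neg_mem _ ha

lemma mem_Ugrp {K : Submodule k (k ⊗[ZMod p] V)} {B : k ⊗[ZMod p] V} :
    B ∈ Ugrp K ↔ B - phiT p k V B ∈ K ⊔ K.map (phiT p k V) := Iff.rfl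

/-- The group `U(K) = {B : B - φ(B) ∈ K + φ(K)}/K`. -/
noncomputable abbrev UK (K : Submodule k (k ⊗[ZMod p] V)) :=
  (↥(Ugrp K)) ⧸ ((K.toAddSubgroup).addSubgroupOf (Ugrp K))

lemma one_tmul_mem_Ugrp (K : Submodule k (k ⊗[ZMod p] V)) (x : V) :
    (1 : k) ⊗ₜ[ZMod p] x ∈ Ugrp K := by
  have h : phiT p k V ((1 : k) ⊗ₜ[ZMod p] x) = (1 : k) ⊗ₜ[ZMod p] x := by
    rw [phiT_apply, LinearMap.rTensor_tmul, frobL_apply, one_pow]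
  rw [mem_Ugrp, h, sub_self]
  exact Submodule.zero_mem _

/-- The natural map `V → U(K)`, `x ↦ (x ⊗ 1) mod K`. -/
noncomputable def toUK (K : Submodule k (k ⊗[ZMod p] V)) : V →+ UK K :=
  (QuotientAddGroup.mk' ((K.toAddSubgroup).addSubgroupOf (Ugrp K))).comp
    (AddMonoidHom.codRestrict
      (((TensorProduct.mk (ZMod p) k V) (1 : k)).toAddMonoidHom) (Ugrp K)
      (fun x => one_tmul_mem_Ugrp K x))

/-- Iterates `φ^i(K)`. -/
noncomputable def phiPow (i : ℕ) (K : Submodule k (k ⊗[ZMod p] V)) :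
    Submodule k (k ⊗[ZMod p] V) :=
  (fun S : Submodule k (k ⊗[ZMod p] V) => S.map (phiT p k V))^[i] K

end Decomp


section StmtSevenAux

open Module Polynomial

private lemma aux_inf_ker {F M : Type*} [Field F] [AddCommGroup M] [Module F M]
    [FiniteDimensional F M] (S : Submodule F M) (f : M →ₗ[F] F) :
    finrank F S ≤ finrank F (S ⊓ LinearMap.ker f : Submodule F M) + 1 := by
  have h1 : finrank F (LinearMap.ker (f ∘ₗ S.subtype))
      = finrank F (S ⊓ LinearMap.ker f : Submodule F M) := by
    rw [LinearMap.ker_comp]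
    have he : Submodule.comap S.subtype (LinearMap.ker f)
        = Submodule.comap S.subtype (S ⊓ LinearMap.ker f) := by
      ext x; simp [Submodule.mem_comap, x.2]
    rw [he]
    exact (Submodule.comapSubtypeEquivOfLe inf_le_left).finrank_eq
  have h2 := LinearMap.finrank_range_add_finrank_ker (f ∘ₗ S.subtype)
  have h3 : finrank F (LinearMap.range (f ∘ₗ S.subtype)) ≤ 1 := by
    simpa using Submodule.finrank_le (LinearMap.range (f ∘ₗ S.subtype))
  omega

private lemma aux_weighted (p : ℕ) [Fact p.Prime] (hp : p ≠ 2) (c1 c2 c3 : ZMod p)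
    (h2 : c2 ≠ 0) (h3 : c3 ≠ 0) :
    ∃ x y : ZMod p, c1 + c2 * x ^ 2 + c3 * y ^ 2 = 0 := by
  have hodd : Fintype.card (ZMod p) % 2 = 1 := by
    rw [ZMod.card]
    exact Nat.odd_iff.mp ((Fact.out : p.Prime).odd_of_ne_two hp)
  have hf2 : (C c2 * X ^ 2 + C c1 : (ZMod p)[X]).degree = 2 := by
    have h0 : (C c1 : (ZMod p)[X]).degree < (C c2 * X ^ 2).degree := by
      rw [degree_C_mul_X_pow 2 h2]
      exact lt_of_le_of_lt degree_C_le (by norm_num)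
    rw [degree_add_eq_left_of_degree_lt h0, degree_C_mul_X_pow 2 h2]; rfl
  have hg2 : (C c3 * X ^ 2 : (ZMod p)[X]).degree = 2 := by
    rw [degree_C_mul_X_pow 2 h3]; rfl
  obtain ⟨a, bb, hab⟩ := FiniteField.exists_root_sum_quadratic hf2 hg2 hodd
  refine ⟨a, bb, ?_⟩
  simp only [eval_add, eval_mul, eval_C, eval_pow, eval_X] at hab
  linear_combination hab

end StmtSevenAux

theorem stmt7 (p : ℕ) [Fact p.Prime] (hp : p ≠ 2)
    (k : Type*) [Field k] [IsAlgClosed k] [CharP k p] [Algebra (ZMod p) k]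
    (σ0 : ℕ)
    (Vt : Type*) [AddCommGroup Vt] [Module (ZMod p) Vt]
    (b : LinearMap.BilinForm (ZMod p) Vt)
    (hsymm : ∀ x y, b x y = b y x) (hnd : Nondeg b) (hnn : NonNeutral b)
    (hdim : Module.finrank (ZMod p) Vt = 2 * σ0 + 2)
    (V : Type*) [AddCommGroup V] [Module (ZMod p) V]
    (bV : LinearMap.BilinForm (ZMod p) V)
    (j : V →ₗ[ZMod p] Vt) (hjinj : Function.Injective j)
    (hcompat : ∀ x y, b (j x) (j y) = bV x y)
    (e f : Vt) (hee : b e e = 0) (hff : b f f = 0) (hef : b e f = -1)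
    (hje : ∀ x, b e (j x) = 0) (hjf : ∀ x, b f (j x) = 0)
    (hspan : LinearMap.range j ⊔ Submodule.span (ZMod p) {e, f} = ⊤)
    (Kt : Submodule k (k ⊗[ZMod p] Vt))
    (hKt : IsCharSub (σ0 + 1) b Kt)
    (heK : (1 : k) ⊗ₜ[ZMod p] e ∉ Kt)
    (hσ : 2 ≤ σ0 - Module.finrank (ZMod p) ↥(KcapV (piV k b e hee Kt))) :
    ∃ v : Vt, v ≠ 0 ∧ b v v = 0 ∧ b v e ≠ 0 ∧ (1 : k) ⊗ₜ[ZMod p] v ∉ Kt ∧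
      ∀ x : Vt, (1 : k) ⊗ₜ[ZMod p] x ∈ Kt → b v x = 0 := by
  classical
  haveI : FiniteDimensional (ZMod p) Vt :=
    Module.finite_of_finrank_pos (by rw [hdim]; omega)
  have hrefl : b.IsRefl := fun x y h => by rw [hsymm]; exact h
  have h2p : (2 : ZMod p) ≠ 0 := by
    intro h
    have h2 : ((2 : ℕ) : ZMod p) = 0 := by exact_mod_cast h
    have := (CharP.cast_eq_zero_iff (ZMod p) p 2).mp h2
    exact hp ((Nat.prime_dvd_prime_iff_eq Fact.out Nat.prime_two).mp this)
  set W : Submodule (ZMod p) Vt := KcapV Kt with hWdef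
  have hmemW : ∀ x : Vt, x ∈ W ↔ (1 : k) ⊗ₜ[ZMod p] x ∈ Kt := fun x => Iff.rfl
  have heW : e ∉ W := fun h => heK ((hmemW e).mp h)
  have hWiso : ∀ x ∈ W, ∀ y ∈ W, b x y = 0 := by
    intro x hx y hy
    have h0 := hKt.1 _ ((hmemW x).mp hx) _ ((hmemW y).mp hy)
    rw [LinearMap.BilinForm.baseChange_tmul] at h0
    have halg : algebraMap (ZMod p) k (b x y) = 0 := by
      rw [Algebra.algebraMap_eq_smul_one]
      simpa using h0
    exact (map_eq_zero_iff _ (algebraMap (ZMod p) k).injective).mp halg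
  set Wp : Submodule (ZMod p) Vt := b.orthogonal W with hWpdef
  have hWWp : W ≤ Wp := fun w hw n hn => hWiso n hn w hw
  -- dimension facts
  set m := Module.finrank (ZMod p) ↥(KcapV (piV k b e hee Kt)) with hmdef
  have hm2 : m + 2 ≤ σ0 := by omega
  have hinj : Module.finrank (ZMod p) ↥(W ⊓ perp b e : Submodule (ZMod p) Vt) ≤ m := by
    set g : ↥(W ⊓ perp b e : Submodule (ZMod p) Vt) →ₗ[ZMod p] Vquot b e hee :=
      (lineV b e hee).mkQ ∘ₗ Submodule.inclusion inf_le_right with hgdef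
    have hrange : ∀ x, g x ∈ KcapV (piV k b e hee Kt) := by
      intro x
      show (1 : k) ⊗ₜ[ZMod p] (g x) ∈ piV k b e hee Kt
      refine Submodule.mem_map.mpr
        ⟨(1 : k) ⊗ₜ[ZMod p] (Submodule.inclusion inf_le_right x), ?_, ?_⟩
      · show iotaPerp k b e _ ∈ Kt
        rw [iotaPerp, LinearMap.baseChange_tmul]
        exact (hmemW _).mp (Submodule.mem_inf.mp x.2).1
      · rw [qMap, LinearMap.baseChange_tmul]
        rfl
    have hginj : Function.Injective g := by
      intro a a' haa
      have hmk : Submodule.Quotient.mk (p := lineV b e hee)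
          (Submodule.inclusion inf_le_right (a - a')) = 0 := by
        rw [map_sub]
        rw [Submodule.Quotient.mk_sub]
        have : g a - g a' = 0 := by rw [haa, sub_self]
        exact this
      have hline : Submodule.inclusion (inf_le_right :
          (W ⊓ perp b e : Submodule (ZMod p) Vt) ≤ perp b e) (a - a') ∈ lineV b e hee :=
        (Submodule.Quotient.mk_eq_zero _).mp hmk
      obtain ⟨c, hc⟩ := Submodule.mem_span_singleton.mp hline
      have hcv : c • e = ((a : Vt) - (a' : Vt)) := congrArg Subtype.val hc
      have hsubW : ((a : Vt) - (a' : Vt)) ∈ W :=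
        W.sub_mem (Submodule.mem_inf.mp a.2).1 (Submodule.mem_inf.mp a'.2).1
      have hc0 : c = 0 := by
        by_contra hc0
        exact heW (by
          have : e = c⁻¹ • ((a : Vt) - (a' : Vt)) := by
            rw [← hcv, smul_smul, inv_mul_cancel₀ hc0, one_smul]
          rw [this]
          exact W.smul_mem _ hsubW)
      have : (a : Vt) - (a' : Vt) = 0 := by rw [← hcv, hc0, zero_smul]
      exact Subtype.ext (sub_eq_zero.mp this)
    exact LinearMap.finrank_le_finrank_of_injective
      (f := LinearMap.codRestrict (KcapV (piV k b e hee Kt)) g hrange)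
      (fun a a' haa => hginj (by simpa using congrArg Subtype.val haa))
  have hWle : Module.finrank (ZMod p) W ≤ m + 1 := by
    have h1 := aux_inf_ker W (b e)
    have h2 : (W ⊓ LinearMap.ker (b e) : Submodule (ZMod p) Vt)
        = (W ⊓ perp b e : Submodule (ZMod p) Vt) := rfl
    rw [h2] at h1
    omega
  have hfrW : Module.finrank (ZMod p) W + 1 ≤ σ0 := by omega
  have hWpfr : Module.finrank (ZMod p) Wp
      = Module.finrank (ZMod p) Vt - Module.finrank (ZMod p) W :=
    LinearMap.BilinForm.finrank_orthogonal ((LinearMap.IsRefl.nondegenerate_iff_separatingLeft hrefl).mpr hnd) W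
  have hWVt : Module.finrank (ZMod p) W ≤ Module.finrank (ZMod p) Vt :=
    Submodule.finrank_le W
  -- reduce to finding v ∉ W, orthogonal to W, isotropic, not orthogonal to e
  suffices h : ∃ v : Vt, v ∉ W ∧ (∀ w ∈ W, b w v = 0) ∧ b v v = 0 ∧ b v e ≠ 0 by
    obtain ⟨v, hvW, hvperp, hvv, hve⟩ := h
    refine ⟨v, ?_, hvv, hve, fun hmem => hvW ((hmemW v).mpr hmem), ?_⟩
    · intro h0; apply hve; rw [h0]; simp
    · intro x hx
      rw [hsymm]
      exact hvperp x ((hmemW x).mpr hx)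
  by_cases hcase : ∀ w ∈ W, b w e = 0
  · -- Case A : e ∈ W^⊥
    have hexu : ∃ u ∈ Wp, b u e ≠ 0 := by
      by_contra hcon
      push_neg at hcon
      have hmem : e ∈ b.orthogonal Wp := fun n hn => hcon n hn
      rw [hWpdef, LinearMap.BilinForm.orthogonal_orthogonal ((LinearMap.IsRefl.nondegenerate_iff_separatingLeft hrefl).mpr hnd) hrefl] at hmem
      exact heW hmem
    obtain ⟨u, huWp, hue⟩ := hexu
    have h2c : 2 * b u e ≠ 0 := mul_ne_zero h2p hue
    obtain ⟨t, ht⟩ : ∃ t : ZMod p, t * (2 * b u e) = b u u :=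
      ⟨b u u / (2 * b u e), div_mul_cancel₀ _ h2c⟩
    have hbeu : b e u = b u e := hsymm e u
    have hcalc : b (u - t • e) e = b u e := by
      simp only [map_sub, map_smul, LinearMap.sub_apply, LinearMap.smul_apply, smul_eq_mul, hee]
      ring
    refine ⟨u - t • e, ?_, ?_, ?_, ?_⟩
    · intro hmem
      apply hue
      rw [← hcalc]
      exact hcase _ hmem
    · intro w hw
      simp only [map_sub, map_smul, smul_eq_mul]
      rw [huWp w hw, hcase w hw]
      ring
    · simp only [map_sub, map_smul, LinearMap.sub_apply, LinearMap.smul_apply, smul_eq_mul]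
      rw [hee, hbeu]
      linear_combination -ht
    · rw [hcalc]; exact hue
  · -- Case B : some w0 ∈ W with b w0 e ≠ 0
    push_neg at hcase
    obtain ⟨w0, hw0W, hw0e⟩ := hcase
    have hpick : ∀ S : Submodule (ZMod p) Vt, W ≤ S →
        Module.finrank (ZMod p) W < Module.finrank (ZMod p) S → ∃ u ∈ S, u ∉ W := by
      intro S hle hlt
      by_contra hcon
      push_neg at hcon
      have hSW : S ≤ W := fun u hu => hcon u hu
      have := Submodule.finrank_mono hSW
      omega
    have hsub : ∃ v0, v0 ∈ Wp ∧ v0 ∉ W ∧ b v0 v0 = 0 := by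
      obtain ⟨u1, hu1Wp, hu1W⟩ := hpick Wp hWWp (by omega)
      by_cases hc1 : b u1 u1 = 0
      · exact ⟨u1, hu1Wp, hu1W, hc1⟩
      have hWS1 : W ≤ Wp ⊓ LinearMap.ker (b u1) := fun w hw =>
        Submodule.mem_inf.mpr ⟨hWWp hw, by rw [LinearMap.mem_ker, hsymm]; exact hu1Wp w hw⟩
      have hS1fr := aux_inf_ker Wp (b u1)
      obtain ⟨u2, hu2S1, hu2W⟩ := hpick (Wp ⊓ LinearMap.ker (b u1)) hWS1 (by omega)
      obtain ⟨hu2Wp, hu2k1⟩ := Submodule.mem_inf.mp hu2S1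
      by_cases hc2 : b u2 u2 = 0
      · exact ⟨u2, hu2Wp, hu2W, hc2⟩
      have hWS2 : W ≤ (Wp ⊓ LinearMap.ker (b u1)) ⊓ LinearMap.ker (b u2) := fun w hw =>
        Submodule.mem_inf.mpr ⟨hWS1 hw, by rw [LinearMap.mem_ker, hsymm]; exact hu2Wp w hw⟩
      have hS2fr := aux_inf_ker (Wp ⊓ LinearMap.ker (b u1)) (b u2)
      obtain ⟨u3, hu3S2, hu3W⟩ :=
        hpick ((Wp ⊓ LinearMap.ker (b u1)) ⊓ LinearMap.ker (b u2)) hWS2 (by omega)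
      obtain ⟨hu3S1, hu3k2⟩ := Submodule.mem_inf.mp hu3S2
      obtain ⟨hu3Wp, hu3k1⟩ := Submodule.mem_inf.mp hu3S1
      by_cases hc3 : b u3 u3 = 0
      · exact ⟨u3, hu3Wp, hu3W, hc3⟩
      obtain ⟨x, y, hxy⟩ := aux_weighted p hp (b u1 u1) (b u2 u2) (b u3 u3) hc2 hc3
      have h12 : b u1 u2 = 0 := LinearMap.mem_ker.mp hu2k1
      have h13 : b u1 u3 = 0 := LinearMap.mem_ker.mp hu3k1
      have h23 : b u2 u3 = 0 := LinearMap.mem_ker.mp hu3k2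
      have h21 : b u2 u1 = 0 := by rw [hsymm]; exact h12
      have h31 : b u3 u1 = 0 := by rw [hsymm]; exact h13
      have h32 : b u3 u2 = 0 := by rw [hsymm]; exact h23
      refine ⟨u1 + x • u2 + y • u3, ?_, ?_, ?_⟩
      · exact Submodule.add_mem _
          (Submodule.add_mem _ hu1Wp (Submodule.smul_mem _ _ hu2Wp))
          (Submodule.smul_mem _ _ hu3Wp)
      · intro hmem
        have h0 : b (u1 + x • u2 + y • u3) u1 = 0 := hu1Wp _ hmem
        simp only [map_add, map_smul, LinearMap.add_apply, LinearMap.smul_apply,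
          smul_eq_mul, h21, h31] at h0
        apply hc1
        linear_combination h0
      · simp only [map_add, map_smul, LinearMap.add_apply, LinearMap.smul_apply, smul_eq_mul,
          h12, h13, h23, h21, h31, h32]
        linear_combination hxy
    obtain ⟨v0, hv0Wp, hv0W, hv0iso⟩ := hsub
    by_cases hv0e : b v0 e = 0
    · refine ⟨v0 + w0, ?_, ?_, ?_, ?_⟩
      · intro hmem
        apply hv0W
        have : (v0 + w0) - w0 ∈ W := W.sub_mem hmem hw0W
        simpa using this
      · intro w hw
        simp only [map_add]
        rw [hv0Wp w hw, hWiso w hw w0 hw0W]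
        ring
      · have hbv0w0 : b v0 w0 = 0 := by rw [hsymm]; exact hv0Wp w0 hw0W
        simp only [map_add, LinearMap.add_apply]
        rw [hv0iso, hbv0w0, hv0Wp w0 hw0W, hWiso w0 hw0W w0 hw0W]
        ring
      · simp only [map_add, LinearMap.add_apply]
        rw [hv0e]
        simpa using hw0e
    · exact ⟨v0, hv0W, fun w hw => hv0Wp w hw, hv0iso, hv0e⟩
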